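/- Suppose xi = u_{i_m} wedge u_{i_{m-1}} wedge ... and eta = u_{j_m} wedge u_{j_{m-1}} wedge ... index top and bottom boundary conditions of a one-row Delta ice system, and there exists an admissible state. Then the sequences interleave: i_m >= j_m >= i_{m-1} >= j_{m-1} >= ... . -/

import Mathlib

/-- Splitting the count of `k ≤ f s` into `k < f s` and `f s = k`. -/
lemma stmt17_split (A m k : ℤ) (f : ℤ → ℤ) :
    ((Finset.Icc A m).filter (fun s => k ≤ f s)).card
      = ((Finset.Icc A m).filter (fun s => k < f s)).card
      + ((Finset.Icc A m).filter (fun s => f s = k)).card := by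
  rw [← Finset.card_union_of_disjoint, ← Finset.filter_or]
  · apply Finset.card_nbij' id id <;> intro a ha <;> simp_all <;> omega
  · rw [Finset.disjoint_filter]
    intro x _ hx hx'
    omega

open Classical in
/-- The count of `f s = k` is governed by existence of a solution. -/
lemma stmt17_single (A m k : ℤ) (hA : A < k) (f : ℤ → ℤ)
    (hmono : ∀ r r' : ℤ, r < r' → r' ≤ m → f r < f r')
    (hN : ∀ s ≤ A, f s = s) :
    ((Finset.Icc A m).filter (fun s => f s = k)).card
      = (if ∃ r ≤ m, f r = k then 1 else 0) := by
  split_ifs with h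
  · obtain ⟨r0, hr0m, hr0⟩ := h
    have hr0A : A ≤ r0 := by
      by_contra hc
      push_neg at hc
      have := hN r0 (by omega)
      omega
    have : (Finset.Icc A m).filter (fun s => f s = k) = {r0} := by
      ext s
      simp only [Finset.mem_filter, Finset.mem_Icc, Finset.mem_singleton]
      constructor
      · rintro ⟨⟨hAs, hsm⟩, hfs⟩
        rcases lt_trichotomy s r0 with h1 | h1 | h1
        · have := hmono s r0 h1 hr0m; omega
        · exact h1
        · have := hmono r0 s h1 hsm; omega
      · rintro rfl
        exact ⟨⟨hr0A, hr0m⟩, hr0⟩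
    rw [this]; simp
  · push_neg at h
    rw [Finset.card_eq_zero, Finset.filter_eq_empty_iff]
    intro s hs
    simp only [Finset.mem_Icc] at hs
    exact h s hs.2

/-- The pure Boolean/arithmetic induction step for the invariant. -/
lemma stmt17_step (lt tp bt rt : Bool) (tn bn tn' bn' : ℕ)
    (hp : xor (xor lt tp) (xor bt rt) = false)
    (hleg1 : ¬(lt = false ∧ tp = false ∧ bt = true))
    (hleg2 : ¬(lt = true ∧ tp = true ∧ bt = false))
    (ht : tn' = tn + (if tp then 1 else 0))
    (hb : bn' = bn + (if bt then 1 else 0))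
    (P1 : bn ≤ tn) (P2 : tn ≤ bn + 1) (P3 : lt = true ↔ tn = bn + 1) :
    bn' ≤ tn' ∧ tn' ≤ bn' + 1 ∧ (rt = true ↔ tn' = bn' + 1) := by
  cases lt <;> cases tp <;> cases bt <;> cases rt <;> simp_all <;> omega

/-- interleaving for one-row Delta ice.  Columns are indexed by `ℤ`
(decreasing from left to right).  The top boundary carries a `-` spin exactly in the
columns `i_m > i_{m-1} > ⋯` and the bottom boundary exactly in the columns
`j_m > j_{m-1} > ⋯` (both sequences satisfying `i_r = j_r = r` for `r ≪ 0`).  A state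
assigns to each horizontal edge a spin; `L k = true` means the edge between columns
`k+1` and `k` (the edge to the left of column `k`) carries `-`, and only finitely many
horizontal edges carry `-`.  At each column `k` the four adjacent edges
`(L k, top k, bottom k, L (k-1))` must carry an even number of `-` spins, and the two
illegal Delta-ice vertex configurations `(+,+,-,-)` and `(-,-,+,+)` are excluded.
Then the boundary sequences interleave: `i_m ≥ j_m ≥ i_{m-1} ≥ j_{m-1} ≥ ⋯`. -/
theorem stmt_17 (m : ℤ) (i j : ℤ → ℤ)
    (hi : ∀ r r' : ℤ, r < r' → r' ≤ m → i r < i r')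
    (hj : ∀ r r' : ℤ, r < r' → r' ≤ m → j r < j r')
    (hieq : ∃ N : ℤ, ∀ r ≤ N, i r = r) (hjeq : ∃ N : ℤ, ∀ r ≤ N, j r = r)
    (top bottom L : ℤ → Bool)
    (htop : ∀ k : ℤ, top k = true ↔ ∃ r ≤ m, i r = k)
    (hbot : ∀ k : ℤ, bottom k = true ↔ ∃ r ≤ m, j r = k)
    (hLfin : Set.Finite {k : ℤ | L k = true})
    (hparity : ∀ k : ℤ, xor (xor (L k) (top k)) (xor (bottom k) (L (k - 1))) = false)
    (hlegal : ∀ k : ℤ,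
        ¬(L k = false ∧ top k = false ∧ bottom k = true) ∧
        ¬(L k = true ∧ top k = true ∧ bottom k = false)) :
    ∀ r ≤ m, j r ≤ i r ∧ i (r - 1) ≤ j r := by
  obtain ⟨Ni, hNi⟩ := hieq
  obtain ⟨Nj, hNj⟩ := hjeq
  intro r hrm
  set A : ℤ := min Ni (min Nj (min (r - 1) (min (i r) (j r)))) with hAdef
  have hANi : A ≤ Ni := by omega
  have hANj : A ≤ Nj := by omega
  have hAr1 : A ≤ r - 1 := by omega
  have hAir : A ≤ i r := by omega
  have hAjr : A ≤ j r := by omega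
  have hAm : A ≤ m := by omega
  clear_value A
  clear hAdef
  have hiA : ∀ s ≤ A, i s = s := fun s hs => hNi s (by omega)
  have hjA : ∀ s ≤ A, j s = s := fun s hs => hNj s (by omega)
  set T : ℤ → ℕ := fun k => ((Finset.Icc A m).filter (fun s => k < i s)).card with hT
  set B : ℤ → ℕ := fun k => ((Finset.Icc A m).filter (fun s => k < j s)).card with hB
  -- bounds for the base case
  have hAA : A ∈ Finset.Icc A m := Finset.mem_Icc.mpr ⟨le_refl A, hAm⟩
  have hne : ((Finset.Icc A m).image i).Nonempty := ⟨i A, Finset.mem_image_of_mem i hAA⟩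
  have hne' : ((Finset.Icc A m).image j).Nonempty := ⟨j A, Finset.mem_image_of_mem j hAA⟩
  set K1 : ℤ := ((Finset.Icc A m).image i).max' hne with hK1def
  set K2 : ℤ := ((Finset.Icc A m).image j).max' hne' with hK2def
  have hK1 : ∀ s ∈ Finset.Icc A m, i s ≤ K1 := fun s hs =>
    Finset.le_max' _ _ (Finset.mem_image_of_mem i hs)
  have hK2 : ∀ s ∈ Finset.Icc A m, j s ≤ K2 := fun s hs =>
    Finset.le_max' _ _ (Finset.mem_image_of_mem j hs)
  clear_value K1 K2
  clear hK1def hK2def hne hne'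
  obtain ⟨bL, hbL⟩ := hLfin.bddAbove
  set Kmax : ℤ := max (bL + 1) (max K1 K2) with hKdef
  have hKb : bL + 1 ≤ Kmax := by omega
  have hKK1 : K1 ≤ Kmax := by omega
  have hKK2 : K2 ≤ Kmax := by omega
  clear_value Kmax
  clear hKdef
  have hTK : T Kmax = 0 := by
    simp only [hT, Finset.card_eq_zero, Finset.filter_eq_empty_iff]
    intro s hs
    have := hK1 s hs
    simp only [not_lt]
    omega
  have hBK : B Kmax = 0 := by
    simp only [hB, Finset.card_eq_zero, Finset.filter_eq_empty_iff]
    intro s hs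
    have := hK2 s hs
    simp only [not_lt]
    omega
  have hLK : L Kmax = false := by
    by_contra hc
    have hKm : L Kmax = true := by revert hc; cases L Kmax <;> simp
    have : Kmax ≤ bL := hbL hKm
    omega
  -- step lemmas for the counting functions
  have hstepT : ∀ k : ℤ, A < k → T (k - 1) = T k + (if top k then 1 else 0) := by
    intro k hk
    have h1 : ∀ s : ℤ, (k - 1 < i s) = (k ≤ i s) := by intro s; simp
    simp only [hT, h1]
    rw [stmt17_split A m k i, stmt17_single A m k hk i hi hiA]
    congr 1
    by_cases h2 : top k = true
    · rw [if_pos h2, if_pos ((htop k).mp h2)]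
    · rw [if_neg h2, if_neg (fun hc => h2 ((htop k).mpr hc))]
  have hstepB : ∀ k : ℤ, A < k → B (k - 1) = B k + (if bottom k then 1 else 0) := by
    intro k hk
    have h1 : ∀ s : ℤ, (k - 1 < j s) = (k ≤ j s) := by intro s; simp
    simp only [hB, h1]
    rw [stmt17_split A m k j, stmt17_single A m k hk j hj hjA]
    congr 1
    by_cases h2 : bottom k = true
    · rw [if_pos h2, if_pos ((hbot k).mp h2)]
    · rw [if_neg h2, if_neg (fun hc => h2 ((hbot k).mpr hc))]
  -- the invariant, by downward induction
  have inv : ∀ k ≤ Kmax, A ≤ k →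
      (B k ≤ T k ∧ T k ≤ B k + 1 ∧ (L k = true ↔ T k = B k + 1)) := by
    refine Int.le_induction_down ?_ ?_
    · intro _
      rw [hTK, hBK, hLK]
      simp
    · intro n hn ih hA'
      have hAn : A < n := by omega
      obtain ⟨P1, P2, P3⟩ := ih (by omega)
      exact stmt17_step (L n) (top n) (bottom n) (L (n - 1)) (T n) (B n)
        (T (n - 1)) (B (n - 1)) (hparity n) (hlegal n).1 (hlegal n).2
        (hstepT n hAn) (hstepB n hAn) P1 P2 P3
  -- auxiliary facts for applying the invariant
  have hrIcc : r ∈ Finset.Icc A m := Finset.mem_Icc.mpr ⟨by omega, hrm⟩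
  constructor
  · -- j r ≤ i r
    by_contra hc
    push_neg at hc
    have hle : i r ≤ Kmax := le_trans (hK1 r hrIcc) hKK1
    obtain ⟨P1, _, _⟩ := inv (i r) hle hAir
    have hTeq : T (i r) = (m - r).toNat := by
      have heq : (Finset.Icc A m).filter (fun s => i r < i s) = Finset.Ioc r m := by
        ext s
        simp only [Finset.mem_filter, Finset.mem_Icc, Finset.mem_Ioc]
        constructor
        · rintro ⟨⟨hAs, hsm⟩, hlt⟩
          refine ⟨?_, hsm⟩
          by_contra hsr
          push_neg at hsr
          rcases eq_or_lt_of_le hsr with h' | h'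
          · rw [h'] at hlt; exact absurd hlt (lt_irrefl _)
          · have := hi s r h' hrm; omega
        · rintro ⟨hrs, hsm⟩
          exact ⟨⟨by omega, hsm⟩, hi r s hrs hsm⟩
      simp only [hT, heq, Int.card_Ioc]
    have hBge : (Finset.Icc r m).card ≤ B (i r) := by
      simp only [hB]
      apply Finset.card_le_card
      intro s hs
      simp only [Finset.mem_Icc] at hs
      simp only [Finset.mem_filter, Finset.mem_Icc]
      refine ⟨⟨by omega, hs.2⟩, ?_⟩
      rcases eq_or_lt_of_le hs.1 with h' | h'
      · rw [← h']; exact hc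
      · have := hj r s h' hs.2; omega
    have hcard : (Finset.Icc r m).card = (m + 1 - r).toNat := Int.card_Icc r m
    omega
  · -- i (r - 1) ≤ j r
    by_contra hc
    push_neg at hc
    have hle : j r ≤ Kmax := le_trans (hK2 r hrIcc) hKK2
    obtain ⟨_, P2, _⟩ := inv (j r) hle hAjr
    have hBeq : B (j r) = (m - r).toNat := by
      have heq : (Finset.Icc A m).filter (fun s => j r < j s) = Finset.Ioc r m := by
        ext s
        simp only [Finset.mem_filter, Finset.mem_Icc, Finset.mem_Ioc]
        constructor
        · rintro ⟨⟨hAs, hsm⟩, hlt⟩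
          refine ⟨?_, hsm⟩
          by_contra hsr
          push_neg at hsr
          rcases eq_or_lt_of_le hsr with h' | h'
          · rw [h'] at hlt; exact absurd hlt (lt_irrefl _)
          · have := hj s r h' hrm; omega
        · rintro ⟨hrs, hsm⟩
          exact ⟨⟨by omega, hsm⟩, hj r s hrs hsm⟩
      simp only [hB, heq, Int.card_Ioc]
    have hTge : (Finset.Icc (r - 1) m).card ≤ T (j r) := by
      simp only [hT]
      apply Finset.card_le_card
      intro s hs
      simp only [Finset.mem_Icc] at hs
      simp only [Finset.mem_filter, Finset.mem_Icc]
      refine ⟨⟨by omega, hs.2⟩, ?_⟩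
      rcases eq_or_lt_of_le hs.1 with h' | h'
      · rw [← h']; exact hc
      · have := hi (r - 1) s h' hs.2; omega
    have hcard : (Finset.Icc (r - 1) m).card = (m + 1 - (r - 1)).toNat := Int.card_Icc (r - 1) m
    omega
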